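/- Let L₁, L₂ be bounded nonpositive self-adjoint operators on a Hilbert space H, and set L^γ = γL₁ + L₂ for γ > 0. Suppose ker L₁ = ℂ·1 (constants) is one-dimensional, spanned by a unit vector u, and suppose f ⟂ u with ⟨f, L₁ f⟩ ≤ -c‖f‖² for some c > 0 on the orthogonal complement of u (spectral gap for L₁). Then ‖e^{t L^γ} f‖ → 0 as γ → ∞, for every t > 0. -/

import Mathlib

open Filter NormedSpace MeasureTheory intervalIntegral

local notation "⟪" x ", " y "⟫" => @inner ℝ _ _ x y

section Aux
variable {H : Type*} [NormedAddCommGroup H] [InnerProductSpace ℝ H] [CompleteSpace H]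

set_option maxHeartbeats 1000000 in
lemma sq_norm_exp_le
    (L₁ L₂ : H →L[ℝ] H) (h1 : IsSelfAdjoint L₁) (h2 : IsSelfAdjoint L₂)
    (hneg2 : ∀ x : H, (inner ℝ (L₂ x) x : ℝ) ≤ 0)
    (u : H) (hu : ‖u‖ = 1) (hu0 : L₁ u = 0)
    (c : ℝ) (hc : 0 < c)
    (hgap : ∀ g : H, (inner ℝ g u : ℝ) = 0 → (inner ℝ g (L₁ g) : ℝ) ≤ -c * ‖g‖ ^ 2)
    (f : H) (hf : (inner ℝ f u : ℝ) = 0)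
    (t : ℝ) (ht : 0 < t) (γ : ℝ) (hγ : 1 ≤ γ) :
    ‖exp (t • (γ • L₁ + L₂)) f‖ ^ 2 ≤
      ‖f‖ ^ 2 / (2 * c * γ * t)
      + (Real.exp (2 * |⟪u, L₂ u⟫| * t) * ‖L₂ u‖ *
          (‖f‖ ^ 2 / (4 * c * Real.sqrt γ) + t / (2 * Real.sqrt γ))) ^ 2 := by
  have hγ0 : (0 : ℝ) < γ := lt_of_lt_of_le one_pos hγ
  set L : H →L[ℝ] H := γ • L₁ + L₂ with hLdef
  set g : ℝ → H := fun s => exp (s • L) f with hgdef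
  have hg : ∀ s, HasDerivAt g (L (g s)) s := fun s => by
    simpa using (hasDerivAt_exp_smul_const' (𝕂 := ℝ) L s).clm_apply (hasDerivAt_const s f)
  have hgc : Continuous g := Differentiable.continuous fun s => (hg s).differentiableAt
  set v : H := L₂ u with hvdef
  set κ : ℝ := ⟪u, v⟫ with hκdef
  set ε : ℝ := (Real.sqrt γ)⁻¹ with hεdef
  have hsγ : 0 < Real.sqrt γ := Real.sqrt_pos.mpr hγ0
  have hε0 : 0 < ε := inv_pos.mpr hsγ
  set a : ℝ → ℝ := fun s => ⟪g s, u⟫ with hadef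
  set p : ℝ → H := fun s => g s - a s • u with hpdef
  set q : ℝ → ℝ := fun s => ‖p s‖ ^ 2 with hqdef
  set h : ℝ → ℝ := fun s => ‖g s‖ ^ 2 with hhdef
  have hsym1 : ∀ x y : H, ⟪L₁ x, y⟫ = ⟪x, L₁ y⟫ := fun x y => h1.isSymmetric x y
  have hsym2 : ∀ x y : H, ⟪L₂ x, y⟫ = ⟪x, L₂ y⟫ := fun x y => h2.isSymmetric x y
  -- orthogonal decomposition facts
  have hpu : ∀ x : H, ⟪x - ⟪x, u⟫ • u, u⟫ = (0 : ℝ) := by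
    intro x
    rw [inner_sub_left, real_inner_smul_left, real_inner_self_eq_norm_sq, hu]
    ring
  -- key quadratic form bound
  have hkey : ∀ x : H, ⟪L x, x⟫ ≤ -(c * γ) * ‖x - ⟪x, u⟫ • u‖ ^ 2 := by
    intro x
    set b : ℝ := ⟪x, u⟫ with hbdef
    set px : H := x - b • u with hpxdef
    have hx : x = px + b • u := by rw [hpxdef]; abel
    have hL1x : L₁ x = L₁ px := by
      rw [hx, map_add, ContinuousLinearMap.map_smul, hu0, smul_zero, add_zero]
    have e1 : ⟪L₁ x, x⟫ = ⟪L₁ px, px⟫ := by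
      rw [hL1x]
      nth_rewrite 1 [hx]
      rw [inner_add_right, real_inner_smul_right, hsym1 px u, hu0, inner_zero_right]
      ring
    have e2 : ⟪L₁ px, px⟫ ≤ -c * ‖px‖ ^ 2 := by
      have := hgap px (hpu x)
      rwa [real_inner_comm] at this
    have e3 : ⟪L x, x⟫ = γ * ⟪L₁ x, x⟫ + ⟪L₂ x, x⟫ := by
      rw [hLdef]
      simp [ContinuousLinearMap.add_apply, ContinuousLinearMap.smul_apply,
        inner_add_left, real_inner_smul_left]
    have e4 := hneg2 x
    have hn : (0:ℝ) ≤ ‖px‖ ^ 2 := sq_nonneg _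
    rw [e3, e1]
    nlinarith [e2]
  -- derivatives
  have hderivh : ∀ s, HasDerivAt h (2 * ⟪L (g s), g s⟫) s := by
    intro s
    have hD := (hg s).inner ℝ (hg s)
    have hfun : (fun s => (⟪g s, g s⟫ : ℝ)) = h := by
      funext s; rw [real_inner_self_eq_norm_sq]
    rw [hfun] at hD
    refine hD.congr_deriv ?_
    rw [real_inner_comm (g s) (L (g s))]
    ring
  have hLgu : ∀ s, ⟪L (g s), u⟫ = ⟪g s, v⟫ := by
    intro s
    have : ⟪L (g s), u⟫ = γ * ⟪L₁ (g s), u⟫ + ⟪L₂ (g s), u⟫ := by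
      rw [hLdef]
      simp [ContinuousLinearMap.add_apply, ContinuousLinearMap.smul_apply,
        inner_add_left, real_inner_smul_left]
    rw [this, hsym1, hu0, inner_zero_right, hsym2]
    ring
  have hderiva : ∀ s, HasDerivAt a (⟪g s, v⟫) s := by
    intro s
    have hD := (hg s).inner ℝ (hasDerivAt_const s u)
    simpa [hadef, hLgu s] using hD
  -- continuity of auxiliary functions
  have hac : Continuous a := by
    exact Continuous.inner hgc continuous_const
  have hpc : Continuous p := hgc.sub (hac.smul continuous_const)
  have hqc : Continuous q := by
    have : Continuous fun s => ‖p s‖ := hpc.norm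
    exact this.pow 2
  have hhc : Continuous h := by
    have : Continuous fun s => ‖g s‖ := hgc.norm
    exact this.pow 2
  have hdc : Continuous fun s => 2 * ⟪L (g s), g s⟫ := by
    exact continuous_const.mul (Continuous.inner (L.continuous.comp hgc) hgc)
  -- q = h - a²
  have hq_eq : ∀ s, q s = h s - a s ^ 2 := by
    intro s
    rw [hqdef]
    simp only
    rw [@norm_sub_sq_real, real_inner_smul_right, norm_smul, hu]
    simp [hadef, hhdef]
    ring
  -- p s = g s - ⟪g s, u⟫ • u
  have hd1 : ∀ s, 2 * ⟪L (g s), g s⟫ ≤ -(2 * c * γ) * q s := by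
    intro s
    have := hkey (g s)
    have hps : p s = g s - ⟪g s, u⟫ • u := rfl
    rw [hqdef]
    simp only [hps]
    nlinarith [this]
  have hqnn : ∀ s, 0 ≤ q s := fun s => sq_nonneg _
  have hderiv_nonpos : ∀ s, 2 * ⟪L (g s), g s⟫ ≤ 0 := by
    intro s
    have := hd1 s
    nlinarith [hqnn s, mul_nonneg (mul_nonneg (mul_nonneg (by norm_num : (0:ℝ) ≤ 2) hc.le) hγ0.le) (hqnn s)]
  -- h is antitone
  have hanti : Antitone h := by
    apply antitone_of_deriv_nonpos (fun s => (hderivh s).differentiableAt)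
    intro s
    rw [(hderivh s).deriv]
    exact hderiv_nonpos s
  have hg0 : g 0 = f := by
    rw [hgdef]; simp
  have hh0 : h 0 = ‖f‖ ^ 2 := by rw [hhdef]; simp [hg0]
  have hhnn : ∀ s, 0 ≤ h s := fun s => sq_nonneg _
  have hInt2 : IntervalIntegrable (fun s => 2 * ⟪L (g s), g s⟫) volume 0 t :=
    hdc.intervalIntegrable 0 t
  have hIntq : IntervalIntegrable q volume 0 t := hqc.intervalIntegrable 0 t
  have hInth : IntervalIntegrable h volume 0 t := hhc.intervalIntegrable 0 t
  have hInta2 : IntervalIntegrable (fun s => a s ^ 2) volume 0 t :=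
    (hac.pow 2).intervalIntegrable 0 t
  have hftc : ∫ s in (0:ℝ)..t, 2 * ⟪L (g s), g s⟫ = h t - h 0 :=
    intervalIntegral.integral_eq_sub_of_hasDerivAt (fun s _ => hderivh s) hInt2
  have h2cγ : (0:ℝ) < 2 * c * γ := by positivity
  have hmono : h t - h 0 ≤ -(2 * c * γ) * ∫ s in (0:ℝ)..t, q s := by
    rw [← hftc, ← intervalIntegral.integral_const_mul]
    exact intervalIntegral.integral_mono_on ht.le hInt2 (hIntq.const_mul _) fun s _ => hd1 s
  have hintq_le : ∫ s in (0:ℝ)..t, q s ≤ ‖f‖ ^ 2 / (2 * c * γ) := by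
    have h1 := hhnn t
    rw [hh0] at hmono
    rw [le_div_iff₀ h2cγ]
    nlinarith
  rw [hh0] at hmono
  have hq_split : ∫ s in (0:ℝ)..t, q s =
      (∫ s in (0:ℝ)..t, h s) - ∫ s in (0:ℝ)..t, a s ^ 2 := by
    rw [show q = fun s => h s - a s ^ 2 from funext hq_eq]
    exact intervalIntegral.integral_sub hInth hInta2
  have hth : t * h t ≤ ∫ s in (0:ℝ)..t, h s := by
    have := intervalIntegral.integral_mono_on ht.le intervalIntegrable_const hInth
      (fun s (hs : s ∈ Set.Icc 0 t) => hanti hs.2)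
    simpa [intervalIntegral.integral_const, smul_eq_mul] using this
  -- the drift function φ
  set I : ℝ := ∫ s in (0:ℝ)..t, ‖p s‖ with hIdef
  have hInn : (0:ℝ) ≤ I := by
    rw [hIdef]
    apply intervalIntegral.integral_nonneg ht.le
    exact fun s _ => norm_nonneg _
  have hpv : ∀ s, ⟪p s, v⟫ = ⟪g s, v⟫ - a s * κ := by
    intro s
    rw [hpdef]
    simp only
    rw [inner_sub_left, real_inner_smul_left, hκdef]
  set φ : ℝ → ℝ := fun s => a s * Real.exp (-(κ * s)) with hφdef
  have hφ' : ∀ s, HasDerivAt φ (Real.exp (-(κ * s)) * ⟪p s, v⟫) s := by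
    intro s
    have hlin : HasDerivAt (fun s : ℝ => -(κ * s)) (-κ) s := by
      simpa [Pi.neg_def] using ((hasDerivAt_id s).const_mul κ).neg
    have he := hlin.exp
    have hD := (hderiva s).mul he
    refine hD.congr_deriv ?_
    rw [hpv s]
    ring
  have hφ0 : φ 0 = 0 := by
    rw [hφdef]
    simp only
    have : a 0 = 0 := by rw [hadef]; simp only; rw [hg0]; exact hf
    rw [this, zero_mul]
  have hDc : Continuous fun s => Real.exp (-(κ * s)) * ⟪p s, v⟫ := by
    exact ((Real.continuous_exp.comp (continuous_const.mul continuous_id).neg)).mul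
      (Continuous.inner hpc continuous_const)
  set E0 : ℝ := Real.exp (|κ| * t) * ‖v‖ with hE0def
  have hE0nn : (0:ℝ) ≤ E0 := by positivity
  set ψ : ℝ → ℝ := fun s => E0 * ‖p s‖ with hψdef
  have hψc : Continuous ψ := continuous_const.mul hpc.norm
  have hψnn : ∀ s, 0 ≤ ψ s := fun s => by
    have : (0:ℝ) ≤ E0 * ‖p s‖ := mul_nonneg hE0nn (norm_nonneg _)
    simpa [hψdef] using this
  have hDψ : ∀ r ∈ Set.Icc (0:ℝ) t, |Real.exp (-(κ * r)) * ⟪p r, v⟫| ≤ ψ r := by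
    intro r hr
    rw [abs_mul, abs_of_pos (Real.exp_pos _)]
    have hb1 : |(⟪p r, v⟫ : ℝ)| ≤ ‖p r‖ * ‖v‖ := abs_real_inner_le_norm _ _
    have hb2 : Real.exp (-(κ * r)) ≤ Real.exp (|κ| * t) := by
      apply Real.exp_le_exp.mpr
      have h3 : -(κ * r) ≤ |κ * r| := neg_le_abs _
      have h4 : |κ * r| = |κ| * r := by rw [abs_mul, abs_of_nonneg hr.1]
      have h5 : |κ| * r ≤ |κ| * t := mul_le_mul_of_nonneg_left hr.2 (abs_nonneg κ)
      linarith
    calc Real.exp (-(κ * r)) * |(⟪p r, v⟫ : ℝ)|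
        ≤ Real.exp (|κ| * t) * (‖p r‖ * ‖v‖) := by
          apply mul_le_mul hb2 hb1 (abs_nonneg _) (Real.exp_pos _).le
      _ = ψ r := by rw [hψdef]; simp only; rw [hE0def]; ring
  have hφbd : ∀ s ∈ Set.Icc (0:ℝ) t, |φ s| ≤ E0 * I := by
    intro s hs
    have hftcφ : ∫ r in (0:ℝ)..s, Real.exp (-(κ * r)) * ⟪p r, v⟫ = φ s - φ 0 :=
      intervalIntegral.integral_eq_sub_of_hasDerivAt (fun r _ => hφ' r)
        (hDc.intervalIntegrable 0 s)
    have hφeq : φ s = ∫ r in (0:ℝ)..s, Real.exp (-(κ * r)) * ⟪p r, v⟫ := by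
      rw [hftcφ, hφ0, sub_zero]
    have habs : |φ s| ≤ ∫ r in (0:ℝ)..s, ψ r := by
      rw [hφeq]
      calc |∫ r in (0:ℝ)..s, Real.exp (-(κ * r)) * ⟪p r, v⟫|
          ≤ ∫ r in (0:ℝ)..s, |Real.exp (-(κ * r)) * ⟪p r, v⟫| :=
            intervalIntegral.abs_integral_le_integral_abs hs.1
        _ ≤ ∫ r in (0:ℝ)..s, ψ r := by
            apply intervalIntegral.integral_mono_on hs.1
              (hDc.abs.intervalIntegrable 0 s) (hψc.intervalIntegrable 0 s)
            intro r hr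
            exact hDψ r ⟨hr.1, hr.2.trans hs.2⟩
    have hmono2 : ∫ r in (0:ℝ)..s, ψ r ≤ ∫ r in (0:ℝ)..t, ψ r := by
      apply intervalIntegral.integral_mono_interval le_rfl hs.1 hs.2
        (Filter.Eventually.of_forall fun r => hψnn r) (hψc.intervalIntegrable 0 t)
    have hψI : ∫ r in (0:ℝ)..t, ψ r = E0 * I := by
      rw [hψdef, hIdef, intervalIntegral.integral_const_mul]
    linarith
  -- bound on |a s|
  set E2 : ℝ := Real.exp (2 * |κ| * t) * ‖v‖ with hE2def
  have hE2nn : (0:ℝ) ≤ E2 := by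
    have : (0:ℝ) ≤ Real.exp (2 * |κ| * t) * ‖v‖ := mul_nonneg (Real.exp_pos _).le (norm_nonneg _)
    simpa [hE2def] using this
  have hexp2 : Real.exp (|κ| * t) * Real.exp (|κ| * t) = Real.exp (2 * |κ| * t) := by
    rw [← Real.exp_add]; ring_nf
  have habd : ∀ s ∈ Set.Icc (0:ℝ) t, |a s| ≤ E2 * I := by
    intro s hs
    have hφs := hφbd s hs
    have ha_eq : a s = φ s * Real.exp (κ * s) := by
      rw [hφdef]
      simp only
      rw [mul_assoc, ← Real.exp_add]
      simp
    have hb2 : Real.exp (κ * s) ≤ Real.exp (|κ| * t) := by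
      apply Real.exp_le_exp.mpr
      have h3 : κ * s ≤ |κ * s| := le_abs_self _
      have h4 : |κ * s| = |κ| * s := by rw [abs_mul, abs_of_nonneg hs.1]
      have h5 : |κ| * s ≤ |κ| * t := mul_le_mul_of_nonneg_left hs.2 (abs_nonneg κ)
      linarith
    rw [ha_eq, abs_mul, abs_of_pos (Real.exp_pos _)]
    calc |φ s| * Real.exp (κ * s) ≤ (E0 * I) * Real.exp (|κ| * t) := by
          apply mul_le_mul hφs hb2 (Real.exp_pos _).le (mul_nonneg hE0nn hInn)
      _ = E2 * I := by
          rw [hE2def, hE0def, ← hexp2]; ring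
  -- bound on I
  have hγsq : Real.sqrt γ * Real.sqrt γ = γ := Real.mul_self_sqrt hγ0.le
  have hIbd : I ≤ ‖f‖ ^ 2 / (4 * c * Real.sqrt γ) + t / (2 * Real.sqrt γ) := by
    have hpt : ∀ s, ‖p s‖ ≤ q s / (2 * ε) + ε / 2 := by
      intro s
      have hqs : q s = ‖p s‖ ^ 2 := rfl
      have hkey2 : q s / (2 * ε) + ε / 2 - ‖p s‖ = (‖p s‖ - ε) ^ 2 / (2 * ε) := by
        rw [hqs]; field_simp; ring
      have hnn := div_nonneg (sq_nonneg (‖p s‖ - ε)) (by positivity : (0:ℝ) ≤ 2 * ε)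
      linarith [hkey2 ▸ hnn]
    have hIc : IntervalIntegrable (fun s => q s / (2 * ε) + ε / 2) volume 0 t :=
      (hIntq.div_const _).add intervalIntegrable_const
    have hIle : I ≤ ∫ s in (0:ℝ)..t, (q s / (2 * ε) + ε / 2) := by
      rw [hIdef]
      exact intervalIntegral.integral_mono_on ht.le (hpc.norm.intervalIntegrable 0 t) hIc
        fun s _ => hpt s
    have heval : ∫ s in (0:ℝ)..t, (q s / (2 * ε) + ε / 2) =
        (∫ s in (0:ℝ)..t, q s) / (2 * ε) + t * (ε / 2) := by
      rw [intervalIntegral.integral_add (hIntq.div_const _) intervalIntegrable_const,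
        intervalIntegral.integral_div, intervalIntegral.integral_const, smul_eq_mul, sub_zero]
    have hqdiv : (∫ s in (0:ℝ)..t, q s) / (2 * ε) ≤ (‖f‖ ^ 2 / (2 * c * γ)) / (2 * ε) := by
      apply div_le_div_of_nonneg_right hintq_le (by positivity)
    have e1 : (‖f‖ ^ 2 / (2 * c * γ)) / (2 * ε) = ‖f‖ ^ 2 / (4 * c * Real.sqrt γ) := by
      rw [hεdef, div_div]
      congr 1
      field_simp
      nlinarith [hγsq]
    have e2 : t * (ε / 2) = t / (2 * Real.sqrt γ) := by
      rw [hεdef]; field_simp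
    rw [heval] at hIle
    rw [← e1, ← e2]
    linarith
  -- assemble
  set K : ℝ := E2 * (‖f‖ ^ 2 / (4 * c * Real.sqrt γ) + t / (2 * Real.sqrt γ)) with hKdef
  have hKnn : 0 ≤ K := by
    rw [hKdef]
    apply mul_nonneg hE2nn
    positivity
  have hSle : E2 * I ≤ K := by
    rw [hKdef]
    exact mul_le_mul_of_nonneg_left hIbd hE2nn
  have hinta2 : ∫ s in (0:ℝ)..t, a s ^ 2 ≤ t * K ^ 2 := by
    have := intervalIntegral.integral_mono_on ht.le hInta2
      (_root_.intervalIntegrable_const (μ := volume) (c := K ^ 2))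
      (fun s hs => by
        have h5 : |a s| ≤ K := (habd s hs).trans hSle
        have h6 := abs_le.mp h5
        nlinarith)
    simpa [intervalIntegral.integral_const, smul_eq_mul, mul_comm] using this
  have hDt : (0:ℝ) < 2 * c * γ * t := by positivity
  have hkey3 : h t * (2 * c * γ * t) ≤ ‖f‖ ^ 2 + 2 * c * γ * t * K ^ 2 := by
    rw [hq_split] at hmono
    nlinarith [hhnn t, hth, hinta2]
  have hfinal : h t ≤ ‖f‖ ^ 2 / (2 * c * γ * t) + K ^ 2 := by
    have hdiv := (le_div_iff₀ hDt).mpr hkey3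
    calc h t ≤ (‖f‖ ^ 2 + 2 * c * γ * t * K ^ 2) / (2 * c * γ * t) := hdiv
      _ = ‖f‖ ^ 2 / (2 * c * γ * t) + K ^ 2 := by field_simp
  exact hfinal

end Aux


/-- let `L₁, L₂` be bounded nonpositive self-adjoint operators
on a real Hilbert space, `L^γ = γL₁ + L₂`. If `ker L₁` is one-dimensional,
spanned by the unit vector `u`, `L₁` has a spectral gap `c > 0` on `u^⊥`, and
`f ⟂ u`, then `‖e^{tL^γ} f‖ → 0` as `γ → ∞`, for every `t > 0`. -/
theorem speeded_semigroup_spectral_gap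
    {H : Type*} [NormedAddCommGroup H] [InnerProductSpace ℝ H] [CompleteSpace H]
    (L₁ L₂ : H →L[ℝ] H) (h1 : IsSelfAdjoint L₁) (h2 : IsSelfAdjoint L₂)
    (hneg1 : ∀ x : H, (inner ℝ (L₁ x) x : ℝ) ≤ 0)
    (hneg2 : ∀ x : H, (inner ℝ (L₂ x) x : ℝ) ≤ 0)
    (u : H) (hu : ‖u‖ = 1)
    (hker : LinearMap.ker (L₁ : H →ₗ[ℝ] H) = Submodule.span ℝ {u})
    (c : ℝ) (hc : 0 < c)
    (hgap : ∀ g : H, (inner ℝ g u : ℝ) = 0 → (inner ℝ g (L₁ g) : ℝ) ≤ -c * ‖g‖ ^ 2)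
    (f : H) (hf : (inner ℝ f u : ℝ) = 0)
    (t : ℝ) (ht : 0 < t) :
    Tendsto (fun γ : ℝ => ‖NormedSpace.exp (t • (γ • L₁ + L₂)) f‖)
      atTop (nhds 0) := by
  have hu0 : L₁ u = 0 := by
    have hmem : u ∈ LinearMap.ker (L₁ : H →ₗ[ℝ] H) := by
      rw [hker]; exact Submodule.mem_span_singleton_self u
    simpa using hmem
  set C1 : ℝ := Real.exp (2 * |(inner ℝ u (L₂ u) : ℝ)| * t) * ‖L₂ u‖ with hC1
  set B : ℝ → ℝ := fun γ => ‖f‖ ^ 2 / (2 * c * γ * t)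
      + (C1 * (‖f‖ ^ 2 / (4 * c * Real.sqrt γ) + t / (2 * Real.sqrt γ))) ^ 2 with hBdef
  -- the bound tends to zero
  have hsqatTop : Tendsto Real.sqrt atTop atTop := by
    apply tendsto_atTop_atTop.mpr
    intro b
    refine ⟨(max b 0) ^ 2, fun x hx => ?_⟩
    have h1' : Real.sqrt ((max b 0) ^ 2) ≤ Real.sqrt x := Real.sqrt_le_sqrt hx
    rw [Real.sqrt_sq (le_max_right b 0)] at h1'
    exact le_trans (le_max_left b 0) h1'
  have hsinv : Tendsto (fun γ : ℝ => (Real.sqrt γ)⁻¹) atTop (nhds 0) :=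
    tendsto_inv_atTop_zero.comp hsqatTop
  have hinv : Tendsto (fun γ : ℝ => γ⁻¹) atTop (nhds 0) := tendsto_inv_atTop_zero
  have t1 : Tendsto (fun γ : ℝ => ‖f‖ ^ 2 / (2 * c * γ * t)) atTop (nhds 0) := by
    have heq : (fun γ : ℝ => ‖f‖ ^ 2 / (2 * c * γ * t))
        = fun γ => (‖f‖ ^ 2 / (2 * c * t)) * γ⁻¹ := by
      funext γ
      rw [show 2 * c * γ * t = 2 * c * t * γ from by ring, div_mul_eq_div_div, div_eq_mul_inv]
    rw [heq]
    simpa using hinv.const_mul (‖f‖ ^ 2 / (2 * c * t))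
  have t2a : Tendsto (fun γ : ℝ => ‖f‖ ^ 2 / (4 * c * Real.sqrt γ)) atTop (nhds 0) := by
    have heq : (fun γ : ℝ => ‖f‖ ^ 2 / (4 * c * Real.sqrt γ))
        = fun γ => (‖f‖ ^ 2 / (4 * c)) * (Real.sqrt γ)⁻¹ := by
      funext γ
      rw [div_mul_eq_div_div, div_eq_mul_inv]
    rw [heq]
    simpa using hsinv.const_mul (‖f‖ ^ 2 / (4 * c))
  have t2b : Tendsto (fun γ : ℝ => t / (2 * Real.sqrt γ)) atTop (nhds 0) := by
    have heq : (fun γ : ℝ => t / (2 * Real.sqrt γ))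
        = fun γ => (t / 2) * (Real.sqrt γ)⁻¹ := by
      funext γ
      rw [div_mul_eq_div_div, div_eq_mul_inv]
    rw [heq]
    simpa using hsinv.const_mul (t / 2)
  have t2 : Tendsto (fun γ : ℝ => (C1 * (‖f‖ ^ 2 / (4 * c * Real.sqrt γ)
      + t / (2 * Real.sqrt γ))) ^ 2) atTop (nhds 0) := by
    have := (((t2a.add t2b).const_mul C1).pow 2)
    simpa using this
  have hB : Tendsto B atTop (nhds 0) := by
    rw [hBdef]
    simpa using t1.add t2
  -- squeeze
  have hBsqrt : Tendsto (fun γ => Real.sqrt (B γ)) atTop (nhds 0) := by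
    have := hB.sqrt
    simpa using this
  apply squeeze_zero' (Filter.Eventually.of_forall fun γ => norm_nonneg _) _ hBsqrt
  filter_upwards [eventually_ge_atTop (1 : ℝ)] with γ hγ
  have hb := sq_norm_exp_le L₁ L₂ h1 h2 hneg2 u hu hu0 c hc hgap f hf t ht γ hγ
  have : ‖NormedSpace.exp (t • (γ • L₁ + L₂)) f‖
      = Real.sqrt (‖NormedSpace.exp (t • (γ • L₁ + L₂)) f‖ ^ 2) :=
    (Real.sqrt_sq (norm_nonneg _)).symm
  rw [this]
  exact Real.sqrt_le_sqrt hb
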